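/- If X is a quasi-Polish space, then the lower powerspace A(X) with the lower Vietoris topology is quasi-Polish. -/
import Mathlib


open Set Topology

/-- The lower powerspace: closed subsets of `X`. -/
def LowerPS (X : Type*) [TopologicalSpace X] : Type _ := {A : Set X // IsClosed A}

/-- Lower Vietoris topology, generated by the sets `◇U = {A | A ∩ U ≠ ∅}` for `U` open. -/
instance (X : Type*) [TopologicalSpace X] : TopologicalSpace (LowerPS X) :=
  .generateFrom {S | ∃ U : Set X, IsOpen U ∧ S = {A : LowerPS X | (A.1 ∩ U).Nonempty}}

/-- The upper powerspace: compact saturated subsets of `X`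
(saturated = intersection of all open neighborhoods). -/
def UpperPS (X : Type*) [TopologicalSpace X] : Type _ :=
  {K : Set X // IsCompact K ∧ K = ⋂₀ {U : Set X | IsOpen U ∧ K ⊆ U}}

/-- Upper Vietoris topology, generated by the sets `□U = {K | K ⊆ U}` for `U` open. -/
instance (X : Type*) [TopologicalSpace X] : TopologicalSpace (UpperPS X) :=
  .generateFrom {S | ∃ U : Set X, IsOpen U ∧ S = {K : UpperPS X | K.1 ⊆ U}}

/-- A `Π⁰₂` subset. -/
def IsPi02 {Y : Type*} [TopologicalSpace Y] (S : Set Y) : Prop :=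
  ∃ U V : ℕ → Set Y, (∀ i, IsOpen (U i)) ∧ (∀ i, IsOpen (V i)) ∧
    ∀ y, y ∈ S ↔ ∀ i, y ∈ U i → y ∈ V i

/-- The Scott topology on `P(ω)`, generated by the sets `{x | F ⊆ x}` for finite `F`. -/
instance : TopologicalSpace (Set ℕ) :=
  .generateFrom {S | ∃ F : Finset ℕ, S = {x : Set ℕ | ↑F ⊆ x}}

/-- A space is quasi-Polish iff it is homeomorphic to a `Π⁰₂` subspace of `P(ω)`
with the Scott topology. -/
def QuasiPolish (X : Type*) [TopologicalSpace X] : Prop :=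
  ∃ S : Set (Set ℕ), IsPi02 S ∧ Nonempty (X ≃ₜ S)

/-- Scott-open subsets of a preorder. -/
def IsScottOpen {α : Type*} [Preorder α] (U : Set α) : Prop :=
  (∀ ⦃a b : α⦄, a ≤ b → a ∈ U → b ∈ U) ∧
  ∀ d : Set α, d.Nonempty → DirectedOn (· ≤ ·) d → ∀ a : α, IsLUB d a → a ∈ U →
    (d ∩ U).Nonempty

/-- The Scott topology on a preorder. -/
def scottTop (α : Type*) [Preorder α] : TopologicalSpace α := .generateFrom {U | IsScottOpen U}

/-- The frame of open subsets of `X`, ordered by inclusion. -/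
def OpensT (X : Type*) [TopologicalSpace X] : Type _ := {U : Set X // IsOpen U}

instance (X : Type*) [TopologicalSpace X] : PartialOrder (OpensT X) :=
  inferInstanceAs (PartialOrder {U : Set X // IsOpen U})

/-- `O(X)` carries the Scott topology. -/
instance (X : Type*) [TopologicalSpace X] : TopologicalSpace (OpensT X) := scottTop (OpensT X)

/-- `□◇U` in `K(A(X))`. -/
def boxDia {X : Type*} [TopologicalSpace X] (U : Set X) : Set (UpperPS (LowerPS X)) :=
  {𝒦 | ∀ A ∈ 𝒦.1, ((A : LowerPS X).1 ∩ U).Nonempty}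

/-- `◇□U` in `A(K(X))`. -/
def diaBox {X : Type*} [TopologicalSpace X] (U : Set X) : Set (LowerPS (UpperPS X)) :=
  {𝒜 | ∃ K ∈ 𝒜.1, (K : UpperPS X).1 ⊆ U}

/-- A space is consonant iff every Scott-open family of opens containing `U` contains
a compact-saturated filter neighborhood `▽K` of `U`. -/
def Consonant (X : Type*) [TopologicalSpace X] : Prop :=
  ∀ H : Set (OpensT X), IsScottOpen H → ∀ U ∈ H,
    ∃ K : UpperPS X, K.1 ⊆ U.1 ∧ ∀ V : OpensT X, K.1 ⊆ V.1 → V ∈ H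

/-- A space is co-consonant. -/
def CoConsonant (Y : Type*) [TopologicalSpace Y] : Prop :=
  ∀ H : Set (OpensT Y), IsScottOpen H → ∀ U ∈ H,
    ∃ F : Finset (Set Y), (∀ A ∈ F, IsClosed A) ∧ (∀ A ∈ F, (U.1 ∩ A).Nonempty) ∧
      ∀ V : OpensT Y, (∀ A ∈ F, (V.1 ∩ A).Nonempty) → V ∈ H


namespace LowerQP

/-- basic Scott-open set -/
def bas (F : Finset ℕ) : Set (Set ℕ) := {x : Set ℕ | ↑F ⊆ x}

lemma isOpen_bas (F : Finset ℕ) : IsOpen (bas F) :=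
  TopologicalSpace.GenerateOpen.basic _ ⟨F, rfl⟩

lemma bas_mono {F : Finset ℕ} {x y : Set ℕ} (hx : x ∈ bas F) (hxy : x ⊆ y) : y ∈ bas F :=
  fun a ha => hxy (hx ha)

lemma open_approx {W : Set (Set ℕ)} (hW : IsOpen W) :
    ∀ x ∈ W, ∃ F : Finset ℕ, ↑F ⊆ x ∧ bas F ⊆ W := by
  have hW' : TopologicalSpace.GenerateOpen
      {S | ∃ F : Finset ℕ, S = {x : Set ℕ | ↑F ⊆ x}} W := hW
  clear hW
  induction hW' with
  | basic s hs =>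
    obtain ⟨F, rfl⟩ := hs
    exact fun x hx => ⟨F, hx, fun z hz => hz⟩
  | univ => exact fun x _ => ⟨∅, by simp, fun z _ => trivial⟩
  | inter s t hs ht ihs iht =>
    intro x hx
    obtain ⟨F, hF, hFs⟩ := ihs x hx.1
    obtain ⟨G, hG, hGt⟩ := iht x hx.2
    refine ⟨F ∪ G, ?_, fun z hz => ⟨hFs ?_, hGt ?_⟩⟩
    · push_cast; exact union_subset hF hG
    · intro a ha; exact hz (by simp [ha])
    · intro a ha; exact hz (by simp [ha])
  | sUnion 𝒮 h ih =>
    rintro x ⟨s, hs, hxs⟩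
    obtain ⟨F, hF, hFs⟩ := ih s hs x hxs
    exact ⟨F, hF, fun z hz => ⟨s, hs, hFs hz⟩⟩

lemma open_upward {W : Set (Set ℕ)} (hW : IsOpen W) {x x' : Set ℕ}
    (hx : x ∈ W) (hxx' : x ⊆ x') : x' ∈ W := by
  obtain ⟨F, hF, hFW⟩ := open_approx hW x hx
  exact hFW fun a ha => hxx' (hF ha)

lemma isOpen_dia {X : Type*} [TopologicalSpace X] {U : Set X} (hU : IsOpen U) :
    IsOpen {A : LowerPS X | (A.1 ∩ U).Nonempty} :=
  TopologicalSpace.GenerateOpen.basic _ ⟨U, hU, rfl⟩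

lemma continuous_into_lowerPS {Z X : Type*} [TopologicalSpace Z] [TopologicalSpace X]
    {f : Z → LowerPS X} (h : ∀ U : Set X, IsOpen U →
      IsOpen {z | ((f z).1 ∩ U).Nonempty}) : Continuous f := by
  rw [show (instTopologicalSpaceLowerPS X) = _ from rfl, continuous_generateFrom_iff]
  rintro s ⟨U, hU, rfl⟩
  exact h U hU

/-- transport of lower powerspaces along homeomorphisms -/
noncomputable def lowerHomeo {X Y : Type*} [TopologicalSpace X] [TopologicalSpace Y]
    (f : X ≃ₜ Y) : LowerPS X ≃ₜ LowerPS Y where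
  toFun A := ⟨f '' A.1, (f.isClosedMap _ A.2)⟩
  invFun B := ⟨f.symm '' B.1, (f.symm.isClosedMap _ B.2)⟩
  left_inv A := Subtype.ext (by
    simp only [← Set.image_comp]
    simp)
  right_inv B := Subtype.ext (by
    simp only [← Set.image_comp]
    simp)
  continuous_toFun := by
    apply continuous_into_lowerPS
    intro U hU
    have : {z : LowerPS X | ((f '' z.1) ∩ U).Nonempty}
        = {z : LowerPS X | (z.1 ∩ (f ⁻¹' U)).Nonempty} := by
      ext z
      simp only [mem_setOf_eq]
      constructor
      · rintro ⟨y, ⟨x, hx, rfl⟩, hyU⟩; exact ⟨x, hx, hyU⟩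
      · rintro ⟨x, hx, hxU⟩; exact ⟨f x, ⟨x, hx, rfl⟩, hxU⟩
    exact this ▸ isOpen_dia (hU.preimage f.continuous)
  continuous_invFun := by
    apply continuous_into_lowerPS
    intro U hU
    have : {z : LowerPS Y | ((f.symm '' z.1) ∩ U).Nonempty}
        = {z : LowerPS Y | (z.1 ∩ (f.symm ⁻¹' U)).Nonempty} := by
      ext z
      simp only [mem_setOf_eq]
      constructor
      · rintro ⟨y, ⟨x, hx, rfl⟩, hyU⟩; exact ⟨x, hx, hyU⟩
      · rintro ⟨x, hx, hxU⟩; exact ⟨f.symm x, ⟨x, hx, rfl⟩, hxU⟩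
    exact this ▸ isOpen_dia (hU.preimage f.symm.continuous)

end LowerQP

namespace LowerQP

/-- a bijective coding of finite subsets of `ℕ` by naturals -/
noncomputable def eF : Finset ℕ ≃ ℕ := Denumerable.eqv (Finset ℕ)

lemma isOpen_code (c : ℕ) : IsOpen {z : Set ℕ | c ∈ z} := by
  have h : {z : Set ℕ | c ∈ z} = bas {c} := by
    ext z; simp [bas]
  rw [h]; exact isOpen_bas _

/-- condition (a): codes in `y` are closed under subsets -/
def Pa (y : Set ℕ) : Prop := ∀ F G : Finset ℕ, G ⊆ F → eF F ∈ y → eF G ∈ y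

/-- condition (b): the extension property -/
def Pb (U V : ℕ → Set (Set ℕ)) (y : Set ℕ) : Prop :=
  ∀ (F : Finset ℕ) (i : ℕ), eF F ∈ y → (↑F : Set ℕ) ∈ U i →
    ∃ F' : Finset ℕ, F ⊆ F' ∧ eF F' ∈ y ∧ (↑F' : Set ℕ) ∈ V i

/-- the image of the embedding of `A(S)` into `P(ω)` -/
def T (U V : ℕ → Set (Set ℕ)) : Set (Set ℕ) := {y | Pa y ∧ Pb U V y}

open scoped Classical in
/-- the recursive construction of a point of `S` -/
noncomputable def bSeq (V : ℕ → Set (Set ℕ)) (y : Set ℕ) (F0 : Finset ℕ) : ℕ → Finset ℕ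
  | 0 => F0
  | n + 1 =>
    if h : ∃ F' : Finset ℕ, bSeq V y F0 n ⊆ F' ∧ eF F' ∈ y ∧
        (↑F' : Set ℕ) ∈ V (Nat.unpair n).1
    then h.choose else bSeq V y F0 n

open scoped Classical in
lemma bSeq_succ (V : ℕ → Set (Set ℕ)) (y : Set ℕ) (F0 : Finset ℕ) (n : ℕ) :
    bSeq V y F0 (n + 1) =
    if h : ∃ F' : Finset ℕ, bSeq V y F0 n ⊆ F' ∧ eF F' ∈ y ∧
        (↑F' : Set ℕ) ∈ V (Nat.unpair n).1
    then h.choose else bSeq V y F0 n := by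
  rw [bSeq]

lemma bSeq_mono (V : ℕ → Set (Set ℕ)) (y : Set ℕ) (F0 : Finset ℕ) :
    Monotone (bSeq V y F0) := by
  apply monotone_nat_of_le_succ
  intro n
  rw [bSeq_succ]
  split_ifs with h
  · exact Finset.le_iff_subset.2 h.choose_spec.1
  · exact le_rfl

lemma bSeq_inY (V : ℕ → Set (Set ℕ)) (y : Set ℕ) (F0 : Finset ℕ) (h0 : eF F0 ∈ y) :
    ∀ n, eF (bSeq V y F0 n) ∈ y := by
  intro n
  induction n with
  | zero => exact h0
  | succ n ih =>
    rw [bSeq_succ]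
    split_ifs with h
    · exact h.choose_spec.2.1
    · exact ih

/-- the key construction: from the extension property, build a point of `S`
extending a given finite set, all of whose finite subsets are coded in `y`. -/
lemma build (U V : ℕ → Set (Set ℕ)) (hU : ∀ i, IsOpen (U i)) (hV : ∀ i, IsOpen (V i))
    (y : Set ℕ) (ha : Pa y) (hb : Pb U V y) (F0 : Finset ℕ) (h0 : eF F0 ∈ y) :
    ∃ x : Set ℕ, (∀ i, x ∈ U i → x ∈ V i) ∧ ↑F0 ⊆ x ∧
      ∀ G : Finset ℕ, ↑G ⊆ x → eF G ∈ y := by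
  set s : ℕ → Finset ℕ := bSeq V y F0 with hs
  set x : Set ℕ := ⋃ n, (↑(s n) : Set ℕ) with hx
  have hsub : ∀ n, (↑(s n) : Set ℕ) ⊆ x := fun n => subset_iUnion (fun n => (↑(s n) : Set ℕ)) n
  have hin : ∀ n, eF (s n) ∈ y := bSeq_inY V y F0 h0
  have hmono : ∀ {m n : ℕ}, m ≤ n → s m ⊆ s n := fun {m n} h => bSeq_mono V y F0 h
  have hG : ∀ G : Finset ℕ, ↑G ⊆ x → ∃ n, G ⊆ s n := by
    intro G hGx
    have hg : ∀ g : ℕ, ∃ n, g ∈ G → g ∈ s n := by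
      intro g
      by_cases hgG : g ∈ G
      · obtain ⟨n, hn⟩ := mem_iUnion.1 (hGx hgG)
        exact ⟨n, fun _ => hn⟩
      · exact ⟨0, fun h => absurd h hgG⟩
    choose f hf using hg
    refine ⟨G.sup f, fun g hgG => ?_⟩
    exact hmono (Finset.le_sup hgG) (hf g hgG)
  refine ⟨x, ?_, ?_, ?_⟩
  · intro i hxU
    obtain ⟨F, hFx, hFU⟩ := open_approx (hU i) x hxU
    obtain ⟨N, hN⟩ := hG F hFx
    -- handle the threat at stage m = pair i N
    set m : ℕ := Nat.pair i N with hm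
    have hi : (Nat.unpair m).1 = i := by rw [hm, Nat.unpair_pair]
    have hNm : s N ⊆ s m := hmono (Nat.right_le_pair i N)
    have hsm : (↑(s m) : Set ℕ) ∈ U i := by
      apply open_upward (hU i) (hFU ?_) (Finset.coe_subset.2 hNm)
      exact fun a ha' => Finset.mem_coe.2 (hN (Finset.mem_coe.1 ha'))
    have hcond : ∃ F' : Finset ℕ, s m ⊆ F' ∧ eF F' ∈ y ∧
        (↑F' : Set ℕ) ∈ V (Nat.unpair m).1 := by
      obtain ⟨F', h1, h2, h3⟩ := hb (s m) i (hin m) hsm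
      exact ⟨F', h1, h2, by rw [hi]; exact h3⟩
    have hstep : s (m + 1) = hcond.choose := by
      show bSeq V y F0 (m + 1) = hcond.choose
      rw [bSeq_succ, dif_pos hcond]
    have hVm : (↑(s (m+1)) : Set ℕ) ∈ V (Nat.unpair m).1 := by
      rw [hstep]; exact hcond.choose_spec.2.2
    have hxV : x ∈ V (Nat.unpair m).1 :=
      open_upward (hV _) hVm (hsub (m+1))
    rw [hi] at hxV
    exact hxV
  · exact hsub 0
  · intro G hGx
    obtain ⟨n, hn⟩ := hG G hGx
    exact ha (s n) G hn (hin n)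

end LowerQP

namespace LowerQP

variable (S : Set (Set ℕ)) (U V : ℕ → Set (Set ℕ))

/-- the embedding `A(S) → P(ω)` -/
def EA (A : Set ↥S) : Set ℕ := {c : ℕ | ∃ x ∈ A, ↑(eF.symm c) ⊆ (x : Set ℕ)}

lemma mem_EA {A : Set ↥S} {F : Finset ℕ} :
    eF F ∈ EA S A ↔ ∃ x ∈ A, ↑F ⊆ (x : Set ℕ) := by
  simp [EA]

/-- the inverse map -/
def Ay (y : Set ℕ) : Set ↥S := {x | ∀ F : Finset ℕ, ↑F ⊆ (x : Set ℕ) → eF F ∈ y}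

lemma Ay_closed (y : Set ℕ) : IsClosed (Ay S y) := by
  rw [← isOpen_compl_iff]
  have h : (Ay S y)ᶜ =
      Subtype.val ⁻¹' (⋃ F ∈ {F : Finset ℕ | eF F ∉ y}, bas F) := by
    ext x
    simp only [Ay, mem_compl_iff, mem_setOf_eq, mem_preimage, mem_iUnion, bas]
    push_neg
    tauto
  rw [h]
  exact (isOpen_biUnion fun F _ => isOpen_bas F).preimage continuous_subtype_val

variable {S U V}

lemma EA_mem_T (hU : ∀ i, IsOpen (U i)) (hV : ∀ i, IsOpen (V i))
    (hS : ∀ x ∈ S, ∀ i, x ∈ U i → x ∈ V i) (A : Set ↥S) : EA S A ∈ T U V := by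
  constructor
  · intro F G hGF hF
    obtain ⟨x, hxA, hFx⟩ := (mem_EA _).1 hF
    exact (mem_EA _).2 ⟨x, hxA, fun a ha => hFx (hGF ha)⟩
  · intro F i hF hFU
    obtain ⟨x, hxA, hFx⟩ := (mem_EA _).1 hF
    have hxU : (x : Set ℕ) ∈ U i := open_upward (hU i) hFU hFx
    have hxV : (x : Set ℕ) ∈ V i := hS x x.2 i hxU
    obtain ⟨G, hGx, hGV⟩ := open_approx (hV i) _ hxV
    refine ⟨F ∪ G, Finset.subset_union_left, (mem_EA _).2 ⟨x, hxA, ?_⟩, hGV ?_⟩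
    · push_cast; exact union_subset hFx hGx
    · intro a ha; exact Finset.mem_coe.2 (Finset.mem_union_right F (Finset.mem_coe.1 ha))

lemma exists_mem_Ay (hU : ∀ i, IsOpen (U i)) (hV : ∀ i, IsOpen (V i))
    (hS : ∀ x, x ∈ S ↔ ∀ i, x ∈ U i → x ∈ V i)
    {y : Set ℕ} (hy : y ∈ T U V) {F : Finset ℕ} (hF : eF F ∈ y) :
    ∃ x : ↥S, x ∈ Ay S y ∧ ↑F ⊆ (x : Set ℕ) := by
  obtain ⟨x, hxS, hFx, hall⟩ := build U V hU hV y hy.1 hy.2 F hF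
  exact ⟨⟨x, (hS x).2 hxS⟩, fun G hGx => hall G hGx, hFx⟩

lemma EA_Ay (hU : ∀ i, IsOpen (U i)) (hV : ∀ i, IsOpen (V i))
    (hS : ∀ x, x ∈ S ↔ ∀ i, x ∈ U i → x ∈ V i)
    {y : Set ℕ} (hy : y ∈ T U V) : EA S (Ay S y) = y := by
  ext c
  have hc : c = eF (eF.symm c) := (eF.apply_symm_apply c).symm
  rw [hc, mem_EA _]
  constructor
  · rintro ⟨x, hxA, hFx⟩
    exact hxA _ hFx
  · intro hcy
    obtain ⟨x, hxA, hFx⟩ := exists_mem_Ay hU hV hS hy hcy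
    exact ⟨x, hxA, hFx⟩

lemma Ay_EA {A : Set ↥S} (hA : IsClosed A) : Ay S (EA S A) = A := by
  ext x
  constructor
  · intro hx
    by_contra hxA
    obtain ⟨W, hW, hWA⟩ := isOpen_induced_iff.1 hA.isOpen_compl
    have hxW : (x : Set ℕ) ∈ W := by
      have hx' : x ∈ Aᶜ := hxA
      rw [← hWA] at hx'
      exact hx'
    obtain ⟨F, hFx, hFW⟩ := open_approx hW _ hxW
    obtain ⟨x', hx'A, hFx'⟩ := (mem_EA _).1 (hx F hFx)
    have : x' ∈ Aᶜ := by
      rw [← hWA]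
      exact hFW hFx'
    exact this hx'A
  · intro hxA F hFx
    exact (mem_EA _).2 ⟨x, hxA, hFx⟩

end LowerQP

namespace LowerQP

/-- The main homeomorphism: `A(S) ≃ₜ T`. -/
noncomputable def mainHomeo (S : Set (Set ℕ)) (U V : ℕ → Set (Set ℕ))
    (hU : ∀ i, IsOpen (U i)) (hV : ∀ i, IsOpen (V i))
    (hS : ∀ x, x ∈ S ↔ ∀ i, x ∈ U i → x ∈ V i) :
    LowerPS ↥S ≃ₜ ↥(T U V) where
  toFun A := ⟨EA S A.1, EA_mem_T hU hV (fun x hx i => (hS x).1 hx i) A.1⟩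
  invFun y := ⟨Ay S y.1, Ay_closed S y.1⟩
  left_inv A := Subtype.ext (Ay_EA A.2)
  right_inv y := Subtype.ext (EA_Ay hU hV hS y.2)
  continuous_toFun := by
    apply Continuous.subtype_mk
    refine continuous_generateFrom_iff.mpr ?_
    rintro s ⟨G, rfl⟩
    have h : (fun A : LowerPS ↥S => EA S A.1) ⁻¹' {x : Set ℕ | ↑G ⊆ x}
        = ⋂ c ∈ G, {A : LowerPS ↥S |
            (A.1 ∩ (Subtype.val ⁻¹' bas (eF.symm c))).Nonempty} := by
      ext A
      simp only [mem_preimage, mem_setOf_eq, mem_iInter]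
      constructor
      · intro hsub c hc
        obtain ⟨x, hxA, hx⟩ := hsub hc
        exact ⟨x, hxA, hx⟩
      · intro hall
        intro c hc
        obtain ⟨x, hxA, hx⟩ := hall c hc
        exact ⟨x, hxA, hx⟩
    rw [h]
    exact isOpen_biInter_finset fun c _ =>
      isOpen_dia ((isOpen_bas _).preimage continuous_subtype_val)
  continuous_invFun := by
    apply continuous_into_lowerPS
    intro U₀ hU₀
    obtain ⟨W, hW, hWU₀⟩ := isOpen_induced_iff.1 hU₀
    have h : {z : ↥(T U V) | ((Ay S z.1) ∩ U₀).Nonempty}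
        = Subtype.val ⁻¹' (⋃ F ∈ {F : Finset ℕ | bas F ⊆ W}, {z : Set ℕ | eF F ∈ z}) := by
      ext ⟨y, hy⟩
      simp only [mem_setOf_eq, mem_preimage, mem_iUnion, exists_prop]
      constructor
      · rintro ⟨x, hxA, hxU₀⟩
        have hxW : (x : Set ℕ) ∈ W := by
          rw [← hWU₀] at hxU₀; exact hxU₀
        obtain ⟨F, hFx, hFW⟩ := open_approx hW _ hxW
        exact ⟨F, hFW, hxA F hFx⟩
      · rintro ⟨F, hFW, hFy⟩
        obtain ⟨x, hxA, hFx⟩ := exists_mem_Ay hU hV hS hy hFy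
        refine ⟨x, hxA, ?_⟩
        rw [← hWU₀]
        exact hFW hFx
    rw [h]
    exact ((isOpen_biUnion fun F _ => isOpen_code (eF F)).preimage
      continuous_subtype_val)

/-- index type for the `Π⁰₂` presentation of `T` -/
def Idx : Type := (Finset ℕ × Finset ℕ) ⊕ (Finset ℕ × ℕ)

noncomputable instance : Denumerable Idx :=
  inferInstanceAs (Denumerable ((Finset ℕ × Finset ℕ) ⊕ (Finset ℕ × ℕ)))

open scoped Classical in
noncomputable def Ua (U : ℕ → Set (Set ℕ)) : Idx → Set (Set ℕ)
  | .inl (F, _) => {z : Set ℕ | eF F ∈ z}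
  | .inr (F, i) => if (↑F : Set ℕ) ∈ U i then {z : Set ℕ | eF F ∈ z} else ∅

open scoped Classical in
noncomputable def Va (V : ℕ → Set (Set ℕ)) : Idx → Set (Set ℕ)
  | .inl (F, G) => if G ⊆ F then {z : Set ℕ | eF G ∈ z} else univ
  | .inr (F, i) => {z : Set ℕ | ∃ F' : Finset ℕ, F ⊆ F' ∧ eF F' ∈ z ∧ (↑F' : Set ℕ) ∈ V i}

lemma isOpen_Ua (U : ℕ → Set (Set ℕ)) (j : Idx) : IsOpen (Ua U j) := by
  rcases j with ⟨F, G⟩ | ⟨F, i⟩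
  · exact isOpen_code _
  · rw [Ua]
    split_ifs with h
    · exact isOpen_code _
    · exact isOpen_empty

lemma isOpen_Va (V : ℕ → Set (Set ℕ)) (j : Idx) : IsOpen (Va V j) := by
  rcases j with ⟨F, G⟩ | ⟨F, i⟩
  · rw [Va]
    split_ifs with h
    · exact isOpen_code _
    · exact isOpen_univ
  · have h : Va V (.inr (F, i))
        = ⋃ F' ∈ {F' : Finset ℕ | F ⊆ F' ∧ (↑F' : Set ℕ) ∈ V i}, {z : Set ℕ | eF F' ∈ z} := by
      ext z
      simp only [Va, mem_setOf_eq, mem_iUnion, exists_prop]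
      tauto
    rw [h]
    exact isOpen_biUnion fun F' _ => isOpen_code _

lemma mem_T_iff (U V : ℕ → Set (Set ℕ)) (y : Set ℕ) :
    y ∈ T U V ↔ ∀ j : Idx, y ∈ Ua U j → y ∈ Va V j := by
  constructor
  · rintro ⟨ha, hb⟩ j
    rcases j with ⟨F, G⟩ | ⟨F, i⟩
    · intro hy
      by_cases h : G ⊆ F
      · simp only [Va, if_pos h, mem_setOf_eq]
        exact ha F G h hy
      · simp only [Va, if_neg h]
        trivial
    · intro hy
      by_cases h : (↑F : Set ℕ) ∈ U i
      · rw [Ua, if_pos h] at hy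
        exact hb F i hy h
      · rw [Ua, if_neg h] at hy
        exact absurd hy (notMem_empty y)
  · intro hall
    constructor
    · intro F G hGF hF
      have := hall (.inl (F, G)) hF
      rw [Va, if_pos hGF] at this
      exact this
    · intro F i hF hFU
      have := hall (.inr (F, i))
      rw [Ua, if_pos hFU] at this
      exact this hF

lemma isPi02_T (U V : ℕ → Set (Set ℕ)) : IsPi02 (T U V) := by
  refine ⟨fun n => Ua U (Denumerable.ofNat Idx n), fun n => Va V (Denumerable.ofNat Idx n),
    fun n => isOpen_Ua U _, fun n => isOpen_Va V _, fun y => ?_⟩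
  rw [mem_T_iff]
  constructor
  · intro h n; exact h _
  · intro h j
    have := h (Encodable.encode j)
    simp only [Denumerable.ofNat_encode] at this
    exact this

end LowerQP


/-- The lower powerspace of a quasi-Polish space is quasi-Polish. -/
theorem lowerPS_quasiPolish (X : Type*) [TopologicalSpace X] (h : QuasiPolish X) :
    QuasiPolish (LowerPS X) := by
  obtain ⟨S, ⟨U, V, hU, hV, hSUV⟩, ⟨e⟩⟩ := h
  exact ⟨LowerQP.T U V, LowerQP.isPi02_T U V,
    ⟨(LowerQP.lowerHomeo e).trans (LowerQP.mainHomeo S U V hU hV hSUV)⟩⟩
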